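/- The shifted geometric mean with shift S ≥ 0 is at least the (unshifted) geometric mean of the same nonnegative values, with equality when S = 0. -/

import Mathlib

/-- Shifted geometric mean of `v` over `I` with shift `S`. -/
noncomputable def Shm {ι : Type*} (I : Finset ι) (v : ι → ℝ) (S : ℝ) : ℝ :=
  (∏ i ∈ I, (v i + S)) ^ ((1 : ℝ) / I.card) - S

/-- Unshifted geometric mean. -/
noncomputable def Gm {ι : Type*} (I : Finset ι) (v : ι → ℝ) : ℝ :=
  (∏ i ∈ I, v i) ^ ((1 : ℝ) / I.card)

theorem shm_ge_gm {ι : Type*} (I : Finset ι) (hI : I.Nonempty) (v : ι → ℝ)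
    (hv : ∀ i ∈ I, 0 ≤ v i) (S : ℝ) (hS : 0 ≤ S) :
    Gm I v ≤ Shm I v S ∧ Shm I v 0 = Gm I v := by
  have hcard : (0 : ℝ) < I.card := by exact_mod_cast Finset.card_pos.mpr hI
  have hw : ((1 : ℝ) / I.card) ≠ 0 := by positivity
  refine ⟨?_, by simp [Shm, Gm]⟩
  unfold Gm Shm
  rw [le_sub_iff_add_le]
  by_cases hz : ∃ i ∈ I, v i + S = 0
  · obtain ⟨i, hi, hiz⟩ := hz
    have hvS : v i = 0 ∧ S = 0 := by
      constructor <;> nlinarith [hv i hi]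
    rw [Finset.prod_eq_zero (f := fun i => v i + S) hi hiz,
      Finset.prod_eq_zero (f := fun i => v i) hi hvS.1,
      Real.zero_rpow hw, hvS.2]
    simp
  · push_neg at hz
    have hpos : ∀ i ∈ I, 0 < v i + S := fun i hi =>
      lt_of_le_of_ne (by linarith [hv i hi]) (Ne.symm (hz i hi))
    -- weights
    set w : ι → ℝ := fun _ => (1 : ℝ) / I.card with hwdef
    have hw0 : ∀ i ∈ I, 0 ≤ w i := fun i _ => by positivity
    have hw1 : ∑ i ∈ I, w i = 1 := by
      simp [hwdef, Finset.sum_const]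
      field_simp
    have h1 := Real.geom_mean_le_arith_mean_weighted I w (fun i => v i / (v i + S)) hw0 hw1
      (fun i hi => div_nonneg (hv i hi) (hpos i hi).le)
    have h2 := Real.geom_mean_le_arith_mean_weighted I w (fun i => S / (v i + S)) hw0 hw1
      (fun i hi => div_nonneg hS (hpos i hi).le)
    have hsum : (∑ i ∈ I, w i * (v i / (v i + S))) + (∑ i ∈ I, w i * (S / (v i + S))) = 1 := by
      rw [← Finset.sum_add_distrib, ← hw1]
      refine Finset.sum_congr rfl fun i hi => ?_
      rw [← mul_add, ← add_div, div_self (hpos i hi).ne']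
      ring
    -- rewrite products of quotients
    have hprod1 : ∏ i ∈ I, (v i / (v i + S)) ^ w i
        = (∏ i ∈ I, v i) ^ ((1:ℝ)/I.card) / (∏ i ∈ I, (v i + S)) ^ ((1:ℝ)/I.card) := by
      rw [← Real.finset_prod_rpow _ _ (fun i hi => hv i hi) _,
        ← Real.finset_prod_rpow _ _ (fun i hi => (hpos i hi).le) _,
        ← Finset.prod_div_distrib]
      exact Finset.prod_congr rfl fun i hi =>
        Real.div_rpow (hv i hi) (hpos i hi).le _
    have hprod2 : ∏ i ∈ I, (S / (v i + S)) ^ w i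
        = S / (∏ i ∈ I, (v i + S)) ^ ((1:ℝ)/I.card) := by
      have e : ∏ i ∈ I, (S / (v i + S)) ^ w i
          = (∏ i ∈ I, S ^ w i) / ∏ i ∈ I, (v i + S) ^ w i := by
        rw [← Finset.prod_div_distrib]
        exact Finset.prod_congr rfl fun i hi => Real.div_rpow hS (hpos i hi).le _
      rw [e, Real.finset_prod_rpow _ _ (fun i hi => (hpos i hi).le) _]
      congr 1
      simp only [hwdef]
      rw [Finset.prod_const, ← Real.rpow_natCast (S ^ ((1:ℝ)/I.card)) I.card,
        ← Real.rpow_mul hS, one_div, inv_mul_cancel₀ hcard.ne', Real.rpow_one]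
    have hP : 0 < (∏ i ∈ I, (v i + S)) ^ ((1:ℝ)/I.card) :=
      Real.rpow_pos_of_pos (Finset.prod_pos hpos) _
    rw [hprod1] at h1
    rw [hprod2] at h2
    have := add_le_add h1 h2
    rw [hsum, ← add_div, div_le_one hP] at this
    exact this
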